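/- For every integer m ≥ 1, the triangle with vertices (-1,-1), (m-1,0), ((2m-3)/4, (2m-1)/2) contains exactly binomial(m+1,2) + 1 lattice points. -/

import Mathlib

noncomputable section

/-- Laurent polynomials in two variables over `K`. -/
abbrev LP (K : Type*) [Field K] := AddMonoidAlgebra K (ℤ × ℤ)

/-- Embedding of lattice points into the real plane. -/
def toR : ℤ × ℤ → ℝ × ℝ := fun p => ((p.1 : ℝ), (p.2 : ℝ))

/-- The Newton polytope of a Laurent polynomial: convex hull of its exponent vectors. -/
def newtonPolytope {K : Type*} [Field K] (f : LP K) : Set (ℝ × ℝ) :=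
  convexHull ℝ (toR '' (f.coeff.support : Set (ℤ × ℤ)))

lemma mem_hull3 {E : Type*} [AddCommGroup E] [Module ℝ E] (A B C : E) {a b c : ℝ}
    (ha : 0 ≤ a) (hb : 0 ≤ b) (hc : 0 ≤ c) (h : a + b + c = 1) :
    a • A + b • B + c • C ∈ convexHull ℝ ({A, B, C} : Set E) := by
  have := Convex.sum_mem (t := (Finset.univ : Finset (Fin 3))) (w := ![a, b, c])
    (z := ![A, B, C]) (convex_convexHull ℝ ({A, B, C} : Set E))
    (by intro i _; fin_cases i <;> assumption)
    (by simp [Fin.sum_univ_three, h])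
    (by intro i _; fin_cases i <;> exact subset_convexHull ℝ _ (by simp))
  simpa [Fin.sum_univ_three] using this

-- key membership characterization
lemma key (m : ℕ) (hm : 1 ≤ m) (x y : ℤ) :
    toR (x, y) ∈ convexHull ℝ
        {((-1 : ℝ), (-1 : ℝ)), ((m : ℝ) - 1, 0),
          ((2 * (m : ℝ) - 3) / 4, (2 * (m : ℝ) - 1) / 2)} ↔
      (x ≤ m * y + m - 1 ∧ y ≤ 2 * x + 1 ∧ 2 * x + y ≤ 2 * (m : ℤ) - 2) := by
  have hm1 : (1 : ℝ) ≤ (m : ℝ) := by exact_mod_cast hm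
  constructor
  · intro h
    set S : Set (ℝ × ℝ) := {q | q.1 ≤ (m : ℝ) * q.2 + m - 1 ∧ q.2 ≤ 2 * q.1 + 1 ∧
      2 * q.1 + q.2 ≤ 2 * (m : ℝ) - 2} with hS
    have hconv : Convex ℝ S := by
      intro p hp q hq a b ha hb hab
      simp only [hS, Set.mem_setOf_eq, Prod.fst_add, Prod.snd_add, Prod.smul_fst,
        Prod.smul_snd, smul_eq_mul] at *
      refine ⟨?_, ?_, ?_⟩ <;> nlinarith [hp.1, hp.2.1, hp.2.2, hq.1, hq.2.1, hq.2.2,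
        mul_le_mul_of_nonneg_left hp.1 ha, mul_le_mul_of_nonneg_left hq.1 hb,
        mul_le_mul_of_nonneg_left hp.2.1 ha, mul_le_mul_of_nonneg_left hq.2.1 hb,
        mul_le_mul_of_nonneg_left hp.2.2 ha, mul_le_mul_of_nonneg_left hq.2.2 hb]
    have hsub : convexHull ℝ
        {((-1 : ℝ), (-1 : ℝ)), ((m : ℝ) - 1, 0),
          ((2 * (m : ℝ) - 3) / 4, (2 * (m : ℝ) - 1) / 2)} ⊆ S := by
      apply convexHull_min _ hconv
      rintro p (rfl | rfl | rfl) <;>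
        simp only [hS, Set.mem_setOf_eq] <;>
        refine ⟨?_, ?_, ?_⟩ <;> nlinarith [sq_nonneg ((m:ℝ) - 1)]
    have hmem := hsub h
    simp only [hS, Set.mem_setOf_eq, toR] at hmem
    refine ⟨?_, ?_, ?_⟩
    · exact_mod_cast hmem.1
    · exact_mod_cast hmem.2.1
    · exact_mod_cast hmem.2.2
  · rintro ⟨h1, h2, h3⟩
    set M : ℝ := (m : ℝ) with hM
    set X : ℝ := (x : ℝ) with hX
    set Y : ℝ := (y : ℝ) with hY
    have h1' : X ≤ M * Y + M - 1 := by rw [hM, hX, hY]; exact_mod_cast h1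
    have h2' : Y ≤ 2 * X + 1 := by rw [hX, hY]; exact_mod_cast h2
    have h3' : 2 * X + Y ≤ 2 * M - 2 := by rw [hM, hX, hY]; exact_mod_cast h3
    have hd1 : (0 : ℝ) < 2 * M + 1 := by linarith
    have hd2 : (0 : ℝ) < 2 * M - 1 := by linarith
    set a : ℝ := (2 * M - 2 - 2 * X - Y) / (2 * M + 1) with ha
    set b : ℝ := (2 * X - Y + 1) / (2 * M - 1) with hb
    set c : ℝ := 4 * (M * Y - X + M - 1) / ((2 * M - 1) * (2 * M + 1)) with hc
    have ha0 : 0 ≤ a := div_nonneg (by linarith) (by linarith)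
    have hb0 : 0 ≤ b := div_nonneg (by linarith) (by linarith)
    have hc0 : 0 ≤ c := div_nonneg (by linarith) (by positivity)
    have hsum : a + b + c = 1 := by
      rw [ha, hb, hc]; field_simp; ring
    have hcomb : toR (x, y) =
        a • ((-1 : ℝ), (-1 : ℝ)) + b • ((M : ℝ) - 1, 0) +
          c • ((2 * M - 3) / 4, (2 * M - 1) / 2) := by
      have hne1 : (2 * M + 1) ≠ 0 := ne_of_gt hd1
      have hne2 : (2 * M - 1) ≠ 0 := ne_of_gt hd2
      rw [ha, hb, hc, Prod.ext_iff]
      constructor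
      · show X = _
        simp only [Prod.fst_add, Prod.smul_fst, smul_eq_mul]
        field_simp
        ring
      · show Y = _
        simp only [Prod.snd_add, Prod.smul_snd, smul_eq_mul]
        field_simp
        ring
    rw [hcomb]
    exact mem_hull3 _ _ _ ha0 hb0 hc0 hsum


-- Gauss-type sum
lemma sum_count (m : ℕ) : ∑ j ∈ Finset.range m, (j + 1) = Nat.choose (m + 1) 2 := by
  induction m with
  | zero => simp
  | succ n ih =>
    rw [Finset.sum_range_succ, ih, Nat.choose_succ_succ (n + 1) 1, Nat.choose_one_right]
    ring


/-- The triangle with vertices (-1,-1), (m-1,0), ((2m-3)/4, (2m-1)/2) contains exactly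
`choose (m+1) 2 + 1` lattice points. -/
theorem stmt6 (m : ℕ) (hm : 1 ≤ m) :
    {p : ℤ × ℤ | toR p ∈ convexHull ℝ
        {((-1 : ℝ), (-1 : ℝ)), ((m : ℝ) - 1, 0),
          ((2 * (m : ℝ) - 3) / 4, (2 * (m : ℝ) - 1) / 2)}}.ncard
      = Nat.choose (m + 1) 2 + 1 := by
  classical
  set F : Finset (ℤ × ℤ) := insert ((-1 : ℤ), (-1 : ℤ))
    ((Finset.range m).biUnion fun j =>
      (Finset.Icc ((j : ℤ) / 2) ((m : ℤ) - 1 - ((j : ℤ) + 1) / 2)).image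
        fun x => (x, (j : ℤ))) with hF
  have hset : {p : ℤ × ℤ | toR p ∈ convexHull ℝ
        {((-1 : ℝ), (-1 : ℝ)), ((m : ℝ) - 1, 0),
          ((2 * (m : ℝ) - 3) / 4, (2 * (m : ℝ) - 1) / 2)}} = ↑F := by
    ext ⟨x, y⟩
    rw [Set.mem_setOf_eq, key m hm x y]
    simp only [hF, Finset.coe_insert, Set.mem_insert_iff, Finset.coe_biUnion,
      Finset.mem_coe, Finset.mem_range, Set.mem_iUnion, Finset.mem_image,
      Finset.mem_Icc, Prod.mk.injEq]
    have hm' : (1 : ℤ) ≤ (m : ℤ) := by exact_mod_cast hm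
    constructor
    · rintro ⟨h1, h2, h3⟩
      have hy1 : -1 ≤ y := by
        by_contra hcon
        push_neg at hcon
        have hneg : (m : ℤ) * (y + 1) ≤ y + 1 := by nlinarith
        have : x ≤ y := by nlinarith
        omega
      by_cases hy : y = -1
      · subst hy
        have : (m : ℤ) * (-1) = -(m : ℤ) := by ring
        left; rw [this] at h1; constructor <;> omega
      · right
        refine ⟨y.toNat, ?_, x, ⟨?_, ?_⟩, rfl, ?_⟩ <;> omega
    · rintro (⟨rfl, rfl⟩ | ⟨j, hj, x', ⟨hx1, hx2⟩, rfl, rfl⟩)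
      · have : (m : ℤ) * (-1) = -(m : ℤ) := by ring
        refine ⟨this ▸ by omega, by omega, by omega⟩
      · have hmj : 0 ≤ (m : ℤ) * (j : ℤ) := by positivity
        refine ⟨?_, ?_, ?_⟩ <;> omega
  rw [hset, Set.ncard_coe_finset]
  have hnot : ((-1 : ℤ), (-1 : ℤ)) ∉ (Finset.range m).biUnion fun j =>
      (Finset.Icc ((j : ℤ) / 2) ((m : ℤ) - 1 - ((j : ℤ) + 1) / 2)).image
        fun x => (x, (j : ℤ)) := by
    simp only [Finset.mem_biUnion, Finset.mem_image, Finset.mem_Icc, Prod.mk.injEq,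
      not_exists, not_and]
    rintro j hj x ⟨hx1, hx2⟩ rfl
    omega
  rw [hF, Finset.card_insert_of_notMem hnot]
  rw [Finset.card_biUnion]
  · have : ∀ j ∈ Finset.range m,
        ((Finset.Icc ((j : ℤ) / 2) ((m : ℤ) - 1 - ((j : ℤ) + 1) / 2)).image
          fun x => (x, (j : ℤ))).card = m - j := by
      intro j hj
      rw [Finset.card_image_of_injective _ (fun a b h => (Prod.mk.injEq _ _ _ _ ▸ h).1),
        Int.card_Icc]
      simp only [Finset.mem_range] at hj
      omega
    rw [Finset.sum_congr rfl this]
    have := Finset.sum_range_reflect (fun j => m - j) m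
    rw [← this]
    have heq : ∀ j ∈ Finset.range m, m - (m - 1 - j) = j + 1 := by
      intro j hj; simp only [Finset.mem_range] at hj; omega
    rw [Finset.sum_congr rfl heq, sum_count]
  · intro i hi j hj hij
    simp only [Finset.disjoint_left, Finset.mem_image, Finset.mem_Icc]
    rintro ⟨p1, p2⟩ ⟨x1, hx1, h1⟩ ⟨x2, hx2, h2⟩
    apply hij
    have := (Prod.mk.injEq _ _ _ _ ▸ h1).2
    have := (Prod.mk.injEq _ _ _ _ ▸ h2).2
    omega
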